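/- Let f : ℝⁿ → ℝⁿ be continuously differentiable with Jacobian Df(x), let λ ≥ 0, ε > 0, and let P be a real symmetric positive definite n×n matrix (inertia 0) such that Df(x)ᵀP + P·Df(x) ⪯ −2λP − εI for all x ∈ ℝⁿ. Then f has at most one zero: if f(a) = 0 and f(b) = 0 then a = b. -/

import Mathlib

open Matrix

/-- `M ⪯ N` iff `N - M` is positive semidefinite. -/
def matLE {m : Type*} [Fintype m] (M N : Matrix m m ℝ) : Prop := (N - M).PosSemidef

/-- A real symmetric matrix has inertia `p`: exactly `p` negative eigenvalues,
`card m − p` positive eigenvalues, and no zero eigenvalues, counted with multiplicity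
(as roots of the characteristic polynomial). -/
def hasInertia {m : Type*} [Fintype m] [DecidableEq m]
    (P : Matrix m m ℝ) (p : ℕ) : Prop :=
  Multiset.countP (fun μ : ℝ => μ < 0) P.charpoly.roots = p ∧
  Multiset.countP (fun μ : ℝ => 0 < μ) P.charpoly.roots = Fintype.card m - p ∧
  (0 : ℝ) ∉ P.charpoly.roots

/-- Number of complex eigenvalues (with algebraic multiplicity) of a real matrix
with strictly positive real part. -/
noncomputable def posReCount {m : Type*} [Fintype m] [DecidableEq m]
    (A : Matrix m m ℝ) : ℕ :=
  Multiset.countP (fun μ : ℂ => 0 < μ.re) (A.map Complex.ofReal).charpoly.roots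

/-- Number of complex eigenvalues (with algebraic multiplicity) of a real matrix
with strictly negative real part. -/
noncomputable def negReCount {m : Type*} [Fintype m] [DecidableEq m]
    (A : Matrix m m ℝ) : ℕ :=
  Multiset.countP (fun μ : ℂ => μ.re < 0) (A.map Complex.ofReal).charpoly.roots

/-- The quadratic form `xᵀ P x`. -/
def quadForm {m : Type*} [Fintype m] (P : Matrix m m ℝ) (x : m → ℝ) : ℝ :=
  x ⬝ᵥ P.mulVec x

/-- Euclidean norm on `m → ℝ`. -/
noncomputable def enorm {m : Type*} [Fintype m] (x : m → ℝ) : ℝ :=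
  Real.sqrt (x ⬝ᵥ x)

/-- `J` is the Jacobian of `f`. -/
def IsJacobianOf {n : ℕ} (J : (Fin n → ℝ) → Matrix (Fin n) (Fin n) ℝ)
    (f : (Fin n → ℝ) → (Fin n → ℝ)) : Prop :=
  ∀ x, HasFDerivAt f (LinearMap.toContinuousLinearMap ((J x).mulVecLin)) x

/-- with a positive definite storage (inertia 0), f has at most one zero. -/
theorem posdef_storage_unique_zero {n : ℕ}
    (f : (Fin n → ℝ) → (Fin n → ℝ)) (J : (Fin n → ℝ) → Matrix (Fin n) (Fin n) ℝ)
    (hf : ContDiff ℝ 1 f) (hJ : IsJacobianOf J f)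
    (P : Matrix (Fin n) (Fin n) ℝ) (hPsymm : P.IsSymm) (hPpos : P.PosDef)
    (lam eps : ℝ) (hlam : 0 ≤ lam) (heps : 0 < eps)
    (hLMI : ∀ x : Fin n → ℝ, matLE ((J x)ᵀ * P + P * J x)
      (-((2 * lam) • P) - eps • (1 : Matrix (Fin n) (Fin n) ℝ))) :
    ∀ a b : Fin n → ℝ, f a = 0 → f b = 0 → a = b := by
  intro a b ha hb
  by_contra hab
  set v : Fin n → ℝ := a - b with hv
  have hvne : v ≠ 0 := sub_ne_zero.mpr hab
  have hq : 0 < v ⬝ᵥ P.mulVec v := by simpa using hPpos.dotProduct_mulVec_pos hvne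
  have hr : 0 < v ⬝ᵥ v := by
    have hne : v ⬝ᵥ v ≠ 0 := fun h => hvne (dotProduct_self_eq_zero.mp h)
    have hnn : 0 ≤ v ⬝ᵥ v := Finset.sum_nonneg fun i _ => mul_self_nonneg _
    exact lt_of_le_of_ne hnn (Ne.symm hne)
  have hsym : ∀ u w : Fin n → ℝ, u ⬝ᵥ P.mulVec w = w ⬝ᵥ P.mulVec u := by
    intro u w
    rw [Matrix.dotProduct_mulVec, ← Matrix.mulVec_transpose, hPsymm.eq, dotProduct_comm]
  -- key pointwise bound
  have key : ∀ x, v ⬝ᵥ P.mulVec ((J x).mulVec v) < 0 := by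
    intro x
    have hS := (hLMI x).dotProduct_mulVec_nonneg v
    simp only [star_trivial] at hS
    have hexp : v ⬝ᵥ (((-((2 * lam) • P) - eps • (1 : Matrix (Fin n) (Fin n) ℝ)) - ((J x)ᵀ * P + P * J x)).mulVec v)
        = -(2*lam) * (v ⬝ᵥ P.mulVec v) - eps * (v ⬝ᵥ v) - 2 * (v ⬝ᵥ P.mulVec ((J x).mulVec v)) := by
      have h1 : v ⬝ᵥ ((J x)ᵀ * P).mulVec v = v ⬝ᵥ P.mulVec ((J x).mulVec v) := by
        rw [← Matrix.mulVec_mulVec, Matrix.dotProduct_mulVec, Matrix.vecMul_transpose,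
          hsym v ((J x).mulVec v), Matrix.dotProduct_mulVec, ← Matrix.mulVec_transpose, hPsymm.eq]
      have h2 : v ⬝ᵥ (P * (J x)).mulVec v = v ⬝ᵥ P.mulVec ((J x).mulVec v) := by
        rw [← Matrix.mulVec_mulVec]
      simp only [Matrix.sub_mulVec, Matrix.add_mulVec, Matrix.neg_mulVec, Matrix.smul_mulVec,
        dotProduct_sub, dotProduct_add, dotProduct_neg, dotProduct_smul, Matrix.one_mulVec,
        smul_eq_mul, h1, h2]
      ring
    rw [hexp] at hS
    nlinarith
  -- the auxiliary function
  set g : ℝ → ℝ := fun t => v ⬝ᵥ P.mulVec (f (b + t • v)) with hg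
  have hderiv : ∀ t : ℝ, HasDerivAt g (v ⬝ᵥ P.mulVec ((J (b + t • v)).mulVec v)) t := by
    intro t
    have hc : HasDerivAt (fun t : ℝ => b + t • v) v t := by
      simpa using ((hasDerivAt_id t).smul_const v).const_add b
    have hfc : HasDerivAt (fun t => f (b + t • v)) ((J (b + t • v)).mulVec v) t := by
      exact (hJ (b + t • v)).comp_hasDerivAt t hc
    let L : (Fin n → ℝ) →ₗ[ℝ] ℝ :=
      { toFun := fun w => v ⬝ᵥ P.mulVec w
        map_add' := fun x y => by simp [Matrix.mulVec_add, dotProduct_add]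
        map_smul' := fun c x => by simp [Matrix.mulVec_smul] }
    have := (LinearMap.toContinuousLinearMap L).hasFDerivAt.comp_hasDerivAt t hfc
    exact this
  have hanti : StrictAnti g := strictAnti_of_deriv_neg fun t => by
    rw [(hderiv t).deriv]; exact key _
  have h10 : g 1 < g 0 := hanti zero_lt_one
  have hg0 : g 0 = 0 := by simp [hg, hb]
  have hg1 : g 1 = 0 := by
    have hba : b + (1:ℝ) • v = a := by simp [hv]
    show v ⬝ᵥ P.mulVec (f (b + (1:ℝ) • v)) = 0
    rw [hba, ha, Matrix.mulVec_zero, dotProduct_zero]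
  rw [hg0, hg1] at h10
  exact lt_irrefl 0 h10
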